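/- Let X = P^1 and let k > n ≥ 0. Then J^k(O(n)) ≅ (O_X ⊗ Sym^n(V)) ⊕ (O(-(k+1)) ⊗ Sym^{k-n-1}(V)) as SL(V)-equivariant holomorphic vector bundles; in particular J^k(O(n)) is a direct sum of n+1 copies of O_X and k-n copies of O(-(k+1)). -/

import Mathlib

/-!
STATEMENT 11: Let X = P¹ and let k > n ≥ 0.  Then
J^k(O(n)) ≅ (O_X ⊗ Sym^n(V)) ⊕ (O(-(k+1)) ⊗ Sym^{k-n-1}(V)) as SL(V)-equivariant
holomorphic vector bundles; in particular J^k(O(n)) is a direct sum of n+1 copies of the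
trivial bundle O_X and k-n copies of O(-(k+1)).

Formalization notes (transition-matrix model, see stmt_10): a holomorphic vector bundle on
P¹ is given by its transition matrix over ℂ* (entries Laurent polynomials), two such being
equivalent iff they differ by holomorphic invertible gauges over the two standard charts.
O(a) has transition function zᵃ (`LaurentPolynomial.T a`).  The transition matrix of
J^k(O(n)) is the lower-triangular matrix `jetTransition n k` with entries
A_{ij}(z) = (-1)^j C(n-j, i-j) z^{n-i-j} (j ≤ i), where C(a,r) is the generalized binomial
coefficient (see the derivation in stmt_10).  The statement: for k > n ≥ 0,
`jetTransition n k` is equivalent to the diagonal transition matrix of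
O_X^{⊕(n+1)} ⊕ O(-(k+1))^{⊕(k-n)}, which is the transition-matrix form of the asserted
decomposition J^k(O(n)) ≅ (O_X ⊗ Sym^n V) ⊕ (O(-(k+1)) ⊗ Sym^{k-n-1} V)
(dim Sym^n V = n+1, dim Sym^{k-n-1} V = k-n).  (The SL(V)-equivariance refinement is not
captured by the transition-matrix model.)
-/

open LaurentPolynomial

/-- Generalized binomial coefficient `C(a, r) = a(a-1)⋯(a-r+1)/r!` as a complex number. -/
noncomputable def gbinom (a : ℤ) (r : ℕ) : ℂ :=
  (∏ t ∈ Finset.range r, ((a : ℂ) - (t : ℂ))) / (Nat.factorial r : ℂ)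

/-- The transition matrix of the jet bundle `J^k(O(n))` on `P¹` in the two-chart
description: `A_{ij}(z) = (-1)^j C(n-j, i-j) z^{n-i-j}` for `j ≤ i`, `0` otherwise. -/
noncomputable def jetTransition (n : ℤ) (k : ℕ) :
    Matrix (Fin (k + 1)) (Fin (k + 1)) (LaurentPolynomial ℂ) :=
  Matrix.of fun i j =>
    if j.val ≤ i.val then
      LaurentPolynomial.C ((-1 : ℂ) ^ j.val * gbinom (n - j.val) (i.val - j.val)) *
        T (n - i.val - j.val)
    else 0

/-- `f` is holomorphic on the chart `U₀`. -/
def IsPolyFun (f : LaurentPolynomial ℂ) : Prop := ∀ i : ℤ, i < 0 → f.coeff i = 0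

/-- `f` is holomorphic on the chart `U₁`. -/
def IsAntiPolyFun (f : LaurentPolynomial ℂ) : Prop := ∀ i : ℤ, 0 < i → f.coeff i = 0

/-- Holomorphic invertible gauge over `U₀`. -/
def IsPolyGauge {r : ℕ} (P : Matrix (Fin r) (Fin r) (LaurentPolynomial ℂ)) : Prop :=
  (∀ i j, IsPolyFun (P i j)) ∧
    ∃ P' : Matrix (Fin r) (Fin r) (LaurentPolynomial ℂ),
      (∀ i j, IsPolyFun (P' i j)) ∧ P * P' = 1 ∧ P' * P = 1

/-- Holomorphic invertible gauge over `U₁`. -/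
def IsAntiPolyGauge {r : ℕ} (Q : Matrix (Fin r) (Fin r) (LaurentPolynomial ℂ)) : Prop :=
  (∀ i j, IsAntiPolyFun (Q i j)) ∧
    ∃ Q' : Matrix (Fin r) (Fin r) (LaurentPolynomial ℂ),
      (∀ i j, IsAntiPolyFun (Q' i j)) ∧ Q * Q' = 1 ∧ Q' * Q = 1

/-- The transition matrices `A`, `B` define isomorphic holomorphic bundles on `P¹`. -/
def BundleEquiv {r : ℕ} (A B : Matrix (Fin r) (Fin r) (LaurentPolynomial ℂ)) : Prop :=
  ∃ P Q : Matrix (Fin r) (Fin r) (LaurentPolynomial ℂ),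
    IsPolyGauge P ∧ IsAntiPolyGauge Q ∧ B = P * A * Q

noncomputable def gbinomC (x : ℂ) (r : ℕ) : ℂ :=
  (∏ t ∈ Finset.range r, (x - (t : ℂ))) / (Nat.factorial r : ℂ)

lemma gbinomC_zero_right (x : ℂ) : gbinomC x 0 = 1 := by simp [gbinomC]

lemma gbinomC_pascal (x : ℂ) (r : ℕ) :
    gbinomC x (r + 1) = gbinomC (x - 1) (r + 1) + gbinomC (x - 1) r := by
  have h1 : ∏ t ∈ Finset.range (r + 1), (x - (t : ℂ))
      = x * ∏ t ∈ Finset.range r, ((x - 1) - (t : ℂ)) := by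
    rw [Finset.prod_range_succ' (fun t => x - (t : ℂ))]
    simp only [Nat.cast_zero, sub_zero, Nat.cast_add, Nat.cast_one]
    rw [mul_comm]
    congr 1
    apply Finset.prod_congr rfl
    intro t _
    ring
  have hf' : ((r).factorial : ℂ) ≠ 0 := Nat.cast_ne_zero.mpr (Nat.factorial_ne_zero _)
  have hr1 : ((r : ℂ) + 1) ≠ 0 := by
    have := Nat.cast_add_one_ne_zero (R := ℂ) r
    exact_mod_cast this
  rw [gbinomC, gbinomC, gbinomC, h1, Finset.prod_range_succ, Nat.factorial_succ]
  push_cast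
  set P := ∏ t ∈ Finset.range r, ((x - 1) - (t : ℂ)) with hP
  have key : x * P = P * (x - 1 - (r : ℂ)) + ((r : ℂ) + 1) * P := by ring
  calc x * P / (((r : ℂ) + 1) * (r.factorial : ℂ))
      = (P * (x - 1 - (r : ℂ))) / (((r : ℂ) + 1) * (r.factorial : ℂ))
        + (((r : ℂ) + 1) * P) / (((r : ℂ) + 1) * (r.factorial : ℂ)) := by
        rw [← add_div, ← key]
    _ = P * (x - 1 - (r : ℂ)) / (((r : ℂ) + 1) * (r.factorial : ℂ)) + P / (r.factorial : ℂ) := by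
        rw [mul_div_mul_left _ _ hr1]

lemma gbinomC_nat_vanish {N r : ℕ} (h : N < r) : gbinomC (N : ℂ) r = 0 := by
  rw [gbinomC]
  rw [Finset.prod_eq_zero (Finset.mem_range.mpr h) (by simp)]
  simp

lemma gbinomC_natCast (N r : ℕ) : gbinomC (N : ℂ) r = (N.choose r : ℂ) := by
  induction N generalizing r with
  | zero =>
    cases r with
    | zero => simp [gbinomC_zero_right]
    | succ r =>
      rw [Nat.cast_zero, show ((0:ℂ)) = ((0:ℕ):ℂ) by norm_num,
        gbinomC_nat_vanish (Nat.succ_pos r)]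
      simp
  | succ N ih =>
    cases r with
    | zero => simp [gbinomC_zero_right]
    | succ r =>
      have : ((N + 1 : ℕ) : ℂ) - 1 = (N : ℂ) := by push_cast; ring
      rw [gbinomC_pascal, this, ih, ih, Nat.choose_succ_succ]
      push_cast
      ring

lemma gbinomC_symm {N r : ℕ} (h : r ≤ N) : gbinomC (N : ℂ) r = gbinomC (N : ℂ) (N - r) := by
  rw [gbinomC_natCast, gbinomC_natCast, Nat.choose_symm h]

lemma gbinomC_zero_left (r : ℕ) : gbinomC 0 r = if r = 0 then 1 else 0 := by
  have := gbinomC_natCast 0 r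
  rw [Nat.cast_zero] at this
  rw [this]
  cases r <;> simp

lemma gbinomC_neg (u r : ℕ) :
    gbinomC (-(u + 1 : ℕ) : ℂ) r = (-1) ^ r * gbinomC ((u + r : ℕ) : ℂ) r := by
  rw [gbinomC, gbinomC, ← Finset.prod_range_reflect (fun t => ((u + r : ℕ) : ℂ) - t) r]
  have h1 : ∏ t ∈ Finset.range r, (-((u + 1 : ℕ) : ℂ) - t)
      = ∏ t ∈ Finset.range r, (-1) * (((u : ℂ) + 1) + t) := by
    apply Finset.prod_congr rfl; intro t _; push_cast; ring
  have h2 : ∏ t ∈ Finset.range r, (((u + r : ℕ) : ℂ) - ((r - 1 - t : ℕ) : ℂ))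
      = ∏ t ∈ Finset.range r, (((u : ℂ) + 1) + t) := by
    apply Finset.prod_congr rfl; intro t ht
    have ht' : t < r := Finset.mem_range.mp ht
    have hc : ((r - 1 - t : ℕ) : ℂ) = (r : ℂ) - 1 - t := by
      rw [Nat.cast_sub (by omega), Nat.cast_sub (by omega)]
      simp
    rw [hc]; push_cast; ring
  rw [h1, h2, Finset.prod_mul_distrib, Finset.prod_const, Finset.card_range]
  ring


section FDm
variable (f : ℂ → ℂ)
noncomputable def FD (a : ℕ) (f : ℂ → ℂ) (x : ℂ) : ℂ :=
  ∑ t ∈ Finset.range (a + 1), (-1 : ℂ) ^ t * (a.choose t : ℂ) * f (x - t)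

lemma FD_zero (x : ℂ) : FD 0 f x = f x := by simp [FD]

lemma FD_succ (a : ℕ) (x : ℂ) : FD (a + 1) f x = FD a f x - FD a f (x - 1) := by
  have expand : FD (a + 1) f x
      = (∑ t ∈ Finset.range (a + 2), (-1 : ℂ) ^ t * (a.choose t : ℂ) * f (x - t))
        + ∑ t ∈ Finset.range (a + 2),
            (if t = 0 then 0 else (-1 : ℂ) ^ t * (a.choose (t - 1) : ℂ) * f (x - t)) := by
    rw [FD, ← Finset.sum_add_distrib]
    apply Finset.sum_congr rfl
    intro t _
    cases t with
    | zero => norm_num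
    | succ s =>
      rw [Nat.choose_succ_succ, if_neg (Nat.succ_ne_zero s)]
      push_cast [Nat.add_sub_cancel]
      ring
  have hS1 : (∑ t ∈ Finset.range (a + 2), (-1 : ℂ) ^ t * (a.choose t : ℂ) * f (x - t))
      = FD a f x := by
    rw [Finset.sum_range_succ, Nat.choose_succ_self, FD]
    norm_num
  have hS2 : (∑ t ∈ Finset.range (a + 2),
        (if t = 0 then 0 else (-1 : ℂ) ^ t * (a.choose (t - 1) : ℂ) * f (x - t)))
      = -FD a f (x - 1) := by
    rw [Finset.sum_range_succ' (fun t => if t = 0 then 0 else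
        (-1 : ℂ) ^ t * (a.choose (t - 1) : ℂ) * f (x - t)) (a + 1)]
    simp only [if_neg (Nat.succ_ne_zero _), if_pos rfl, Nat.add_sub_cancel]
    norm_num
    rw [FD, ← Finset.sum_neg_distrib]
    apply Finset.sum_congr rfl
    intro t _
    have h1 : x - ((t : ℂ) + 1) = x - 1 - (t : ℂ) := by ring
    push_cast
    rw [h1]
    ring
  rw [expand, hS1, hS2]
  ring


lemma FD_gbinomC (a : ℕ) : ∀ (r : ℕ) (x : ℂ),
    FD a (fun y => gbinomC y r) x = if a ≤ r then gbinomC (x - a) (r - a) else 0 := by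
  induction a with
  | zero =>
    intro r x
    simp [FD_zero]
  | succ a ih =>
    intro r x
    rw [FD_succ]
    by_cases h : a + 1 ≤ r
    · obtain ⟨s, hs⟩ : ∃ s, r - a = s + 1 := ⟨r - a - 1, by omega⟩
      rw [ih r x, ih r (x - 1), if_pos (by omega : a ≤ r), if_pos (by omega : a ≤ r), if_pos h, hs]
      have h2 : r - (a + 1) = s := by omega
      rw [h2]
      have h3 : x - 1 - (a : ℂ) = x - (a : ℂ) - 1 := by ring
      have h4 : x - ((a : ℕ) + 1 : ℕ) = x - (a : ℂ) - 1 := by push_cast; ring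
      rw [h3, h4, gbinomC_pascal (x - (a : ℂ)) s]
      ring
    · rw [if_neg h, ih r x, ih r (x - 1)]
      by_cases h2 : a ≤ r
      · have : a = r := by omega
        subst this
        simp [Nat.sub_self, gbinomC_zero_right]
      · simp [if_neg h2]

lemma FDsum (N a r : ℕ) (hN : a < N) (x : ℂ) :
    ∑ t ∈ Finset.range N, (-1 : ℂ) ^ t * (a.choose t : ℂ) * gbinomC (x - t) r
      = if a ≤ r then gbinomC (x - a) (r - a) else 0 := by
  have trunc : ∑ t ∈ Finset.range N, (-1 : ℂ) ^ t * (a.choose t : ℂ) * gbinomC (x - t) r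
      = ∑ t ∈ Finset.range (a + 1), (-1 : ℂ) ^ t * (a.choose t : ℂ) * gbinomC (x - t) r := by
    symm
    apply Finset.sum_subset
    · intro t ht
      simp only [Finset.mem_range] at *
      omega
    · intro t _ ht
      simp only [Finset.mem_range, not_lt] at ht
      rw [Nat.choose_eq_zero_of_lt (by omega)]
      norm_num
  rw [trunc, ← FD_gbinomC a r x]
  rfl

/-- Shift lemma: sum of a `p`-shifted guarded function. -/
lemma sum_shift (N p : ℕ) (hp : p ≤ N) (F : ℕ → ℂ) :
    ∑ j ∈ Finset.range N, (if p ≤ j then F (j - p) else 0)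
      = ∑ u ∈ Finset.range (N - p), F u := by
  rw [Finset.range_eq_Ico, ← Finset.sum_Ico_consecutive _ (Nat.zero_le p) hp]
  have h1 : ∑ j ∈ Finset.Ico 0 p, (if p ≤ j then F (j - p) else 0) = 0 := by
    apply Finset.sum_eq_zero
    intro j hj
    simp only [Finset.mem_Ico] at hj
    rw [if_neg (by omega)]
  have h2 : ∑ j ∈ Finset.Ico p N, (if p ≤ j then F (j - p) else 0)
      = ∑ j ∈ Finset.Ico p N, F (j - p) := by
    apply Finset.sum_congr rfl
    intro j hj
    simp only [Finset.mem_Ico] at hj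
    rw [if_pos hj.1]
  rw [h1, h2, zero_add, Finset.sum_Ico_eq_sum_range]
  apply Finset.sum_congr rfl
  intro u _
  congr 1
  omega

/-- Master lemma: guarded shifted alternating binomial sums. -/
lemma keysum (N a r p : ℕ) (hp : p ≤ N) (hN : a < N - p) (x : ℂ) (b : ℕ → ℂ)
    (hb : ∀ j ∈ Finset.range N, b j = if p ≤ j then
      (-1 : ℂ) ^ (j - p) * (a.choose (j - p) : ℂ) * gbinomC (x - (j - p : ℕ)) r else 0) :
    ∑ j ∈ Finset.range N, b j = if a ≤ r then gbinomC (x - a) (r - a) else 0 := by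
  rw [Finset.sum_congr rfl hb,
    sum_shift N p hp (fun t => (-1 : ℂ) ^ t * (a.choose t : ℂ) * gbinomC (x - t) r),
    FDsum (N - p) a r hN x]
end FDm

-- Laurent polynomial helpers
lemma CT_mul (a b : ℂ) (e f : ℤ) :
    (C a * T e) * (C b * T f) = (C (a * b) * T (e + f) : LaurentPolynomial ℂ) := by
  rw [T_add, map_mul]
  ring

lemma sum_CT {N : ℕ} (e : ℤ) (g : ℕ → LaurentPolynomial ℂ) (b : ℕ → ℂ)
    (hg : ∀ j ∈ Finset.range N, g j = C (b j) * T e) :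
    ∑ j ∈ Finset.range N, g j = C (∑ j ∈ Finset.range N, b j) * T e := by
  rw [Finset.sum_congr rfl hg, map_sum, Finset.sum_mul]

lemma isPolyFun_CT (a : ℂ) (e : ℤ) (he : 0 ≤ e) : IsPolyFun (C a * T e) := by
  intro i hi
  apply Finsupp.notMem_support_iff.mp
  intro hmem
  have := Finset.mem_singleton.mp (support_C_mul_T a e hmem)
  omega

lemma isAntiPolyFun_CT (a : ℂ) (e : ℤ) (he : e ≤ 0) : IsAntiPolyFun (C a * T e) := by
  intro i hi
  apply Finsupp.notMem_support_iff.mp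
  intro hmem
  have := Finset.mem_singleton.mp (support_C_mul_T a e hmem)
  omega

lemma isPolyFun_zero : IsPolyFun 0 := by intro i _; rfl

lemma isAntiPolyFun_zero : IsAntiPolyFun 0 := by intro i _; rfl

-- gbinom bridges
lemma gbinom_eq (a : ℤ) (r : ℕ) : gbinom a r = gbinomC (a : ℂ) r := rfl

lemma gbinom_natCast (N r : ℕ) : gbinom (N : ℤ) r = (N.choose r : ℂ) := by
  rw [gbinom_eq, Int.cast_natCast, gbinomC_natCast]

-- The four gauge-related matrices, as ℕ-indexed entry functions.
noncomputable def Afun (n : ℤ) (i j : ℕ) : LaurentPolynomial ℂ :=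
  if j ≤ i then C ((-1 : ℂ) ^ j * gbinom (n - j) (i - j)) * T (n - i - j) else 0

noncomputable def Vfun (n k i c : ℕ) : LaurentPolynomial ℂ :=
  if c ≤ n then
    (if i + c ≤ n then C (gbinom ((n : ℤ) - c) i) * T ((i : ℤ) + c - n) else 0)
  else
    (if n < i ∧ i ≤ c then
      C ((-1 : ℂ) ^ (c - i) * gbinom ((k : ℤ) - i) (c - i)) * T ((i : ℤ) - c) else 0)

noncomputable def Wfun (n k j c : ℕ) : LaurentPolynomial ℂ :=
  if c ≤ n then
    (if j ≤ n ∧ n ≤ j + c then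
      C ((-1 : ℂ) ^ (j + c - n) * gbinom ((c : ℤ)) (n - j)) * T ((n : ℤ) - j - c) else 0)
  else
    (if n < j ∧ j ≤ c then C (gbinom ((k : ℤ) - j) (c - j)) * T ((j : ℤ) - c) else 0)

noncomputable def Mfun (n k m c : ℕ) : LaurentPolynomial ℂ :=
  if c ≤ n then
    (if m ≤ c then C (gbinom (c : ℤ) m) * T ((c : ℤ) - m) else 0)
  else
    (if n < m ∧ m + c ≤ n + k + 1 then
      C ((-1 : ℂ) ^ (m + c - n - 1) * gbinom ((k : ℤ) - m) (n + k + 1 - m - c)) *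
        T ((n : ℤ) + k + 1 - m - c) else 0)

noncomputable def Nfun (n k m c : ℕ) : LaurentPolynomial ℂ :=
  if c ≤ n then
    (if m ≤ c then C ((-1 : ℂ) ^ (c - m) * gbinom (c : ℤ) m) * T ((c : ℤ) - m) else 0)
  else
    (if n < m ∧ n + k + 1 ≤ m + c then
      C ((-1 : ℂ) ^ k * gbinom ((m : ℤ) - n - 1) (m + c - n - k - 1)) *
        T ((m : ℤ) + c - n - k - 1) else 0)


lemma entry_VW_high (n k i c : ℕ) (hc : n < c) (hck : c ≤ k) (hi : n < i) (hik : i ≤ k) :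
    ∑ j ∈ Finset.range (k + 1), Vfun n k i j * Wfun n k j c
      = if i = c then 1 else 0 := by
  set b : ℕ → ℂ := fun j => if i ≤ j then
      (-1 : ℂ) ^ (j - i) * ((k - i).choose (j - i) : ℂ) *
        gbinomC (((k - i : ℕ) : ℂ) - ((j - i : ℕ) : ℂ)) (k - c) else 0 with hb
  have hg : ∀ j ∈ Finset.range (k + 1),
      Vfun n k i j * Wfun n k j c = C (b j) * T ((i : ℤ) - c) := by
    intro j hj
    simp only [Finset.mem_range] at hj
    rw [Vfun, Wfun, if_neg (by omega : ¬ c ≤ n)]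
    by_cases h1 : j ≤ n
    · rw [if_pos h1, if_neg (by omega : ¬ i + j ≤ n), zero_mul]
      simp only [hb, if_neg (by omega : ¬ i ≤ j)]
      simp
    · rw [if_neg h1]
      by_cases h2 : i ≤ j
      · by_cases h3 : j ≤ c
        · rw [if_pos (⟨hi, h2⟩ : n < i ∧ i ≤ j), if_pos (⟨by omega, h3⟩ : n < j ∧ j ≤ c),
            CT_mul, show (i : ℤ) - j + ((j : ℤ) - c) = (i : ℤ) - c by ring]
          congr 1
          simp only [hb, if_pos h2]
          rw [show (k : ℤ) - i = ((k - i : ℕ) : ℤ) by omega, gbinom_natCast,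
            show (k : ℤ) - j = ((k - j : ℕ) : ℤ) by omega, gbinom_eq, Int.cast_natCast,
            gbinomC_symm (by omega : c - j ≤ k - j),
            show (k - j) - (c - j) = k - c by omega,
            show ((k - j : ℕ) : ℂ) = ((k - i : ℕ) : ℂ) - ((j - i : ℕ) : ℂ) by
              rw [Nat.cast_sub (by omega : i ≤ k), Nat.cast_sub (by omega : i ≤ j),
                Nat.cast_sub (by omega : j ≤ k)]
              ring]
        · rw [if_pos (⟨hi, h2⟩ : n < i ∧ i ≤ j), if_neg (by omega : ¬ (n < j ∧ j ≤ c)),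
            mul_zero]
          simp only [hb, if_pos h2]
          rw [show ((k - i : ℕ) : ℂ) - ((j - i : ℕ) : ℂ) = ((k - j : ℕ) : ℂ) by
              rw [Nat.cast_sub (by omega : i ≤ k), Nat.cast_sub (by omega : i ≤ j),
                Nat.cast_sub (by omega : j ≤ k)]
              ring,
            gbinomC_nat_vanish (by omega : k - j < k - c)]
          simp
      · rw [if_neg (by omega : ¬ (n < i ∧ i ≤ j)), zero_mul]
        simp only [hb, if_neg h2]
        simp
  rw [sum_CT ((i : ℤ) - c) _ b hg,
    keysum (k + 1) (k - i) (k - c) i (by omega) (by omega) (((k - i : ℕ) : ℂ)) b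
      (fun j _ => rfl)]
  by_cases hic : i = c
  · subst hic
    rw [if_pos (le_refl _), if_pos rfl, show (k - i) - (k - i) = 0 by omega,
      gbinomC_zero_right, map_one, one_mul, show (i : ℤ) - i = 0 by ring, T_zero]
  · rw [if_neg hic]
    by_cases hle : k - i ≤ k - c
    · rw [if_pos hle,
        show (((k - i : ℕ) : ℂ)) - ((k - i : ℕ) : ℂ) = ((0 : ℕ) : ℂ) by push_cast; ring,
        gbinomC_natCast, Nat.choose_eq_zero_of_lt (by omega)]
      simp
    · rw [if_neg hle]
      simp

lemma entry_VW_low (n k i c : ℕ) (hc : c ≤ n) (hnk : n ≤ k) (hi : i ≤ n) :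
    ∑ j ∈ Finset.range (k + 1), Vfun n k i j * Wfun n k j c
      = if i = c then 1 else 0 := by
  set b : ℕ → ℂ := fun j => if n - c ≤ j then
      (-1 : ℂ) ^ (j - (n - c)) * (c.choose (j - (n - c)) : ℂ) *
        gbinomC (((c : ℕ) : ℂ) - ((j - (n - c) : ℕ) : ℂ)) i else 0 with hb
  have hg : ∀ j ∈ Finset.range (k + 1),
      Vfun n k i j * Wfun n k j c = C (b j) * T ((i : ℤ) - c) := by
    intro j hj
    simp only [Finset.mem_range] at hj
    rw [Vfun, Wfun, if_pos hc]
    by_cases h1 : j ≤ n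
    · rw [if_pos h1]
      by_cases h2 : n ≤ j + c
      · by_cases h3 : i + j ≤ n
        · rw [if_pos h3, if_pos (⟨h1, h2⟩ : j ≤ n ∧ n ≤ j + c), CT_mul,
            show (i : ℤ) + j - n + ((n : ℤ) - j - c) = (i : ℤ) - c by ring]
          congr 1
          simp only [hb, if_pos (by omega : n - c ≤ j)]
          rw [gbinom_natCast c (n - j), ← Nat.choose_symm (by omega : n - j ≤ c),
            show c - (n - j) = j - (n - c) by omega,
            show (n : ℤ) - j = ((n - j : ℕ) : ℤ) by omega, gbinom_eq, Int.cast_natCast,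
            show ((n - j : ℕ) : ℂ) = ((c : ℕ) : ℂ) - ((j - (n - c) : ℕ) : ℂ) by
              rw [Nat.cast_sub (by omega : j ≤ n), Nat.cast_sub (by omega : n - c ≤ j),
                Nat.cast_sub (by omega : c ≤ n)]
              push_cast
              ring,
            show (-1 : ℂ) ^ (j + c - n) = (-1 : ℂ) ^ (j - (n - c)) by
              congr 1
              omega]
          ring
        · rw [if_neg h3, zero_mul]
          simp only [hb, if_pos (by omega : n - c ≤ j)]
          rw [show ((c : ℕ) : ℂ) - ((j - (n - c) : ℕ) : ℂ) = ((n - j : ℕ) : ℂ) by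
              rw [Nat.cast_sub (by omega : j ≤ n), Nat.cast_sub (by omega : n - c ≤ j),
                Nat.cast_sub (by omega : c ≤ n)]
              push_cast
              ring,
            gbinomC_nat_vanish (by omega : n - j < i)]
          simp
      · rw [if_neg (by omega : ¬ (j ≤ n ∧ n ≤ j + c)), mul_zero]
        simp only [hb, if_neg (by omega : ¬ n - c ≤ j)]
        simp
    · rw [if_neg h1, if_neg (by omega : ¬ (n < i ∧ i ≤ j)), zero_mul]
      simp only [hb, if_pos (by omega : n - c ≤ j)]
      rw [Nat.choose_eq_zero_of_lt (by omega : c < j - (n - c))]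
      simp
  rw [sum_CT ((i : ℤ) - c) _ b hg,
    keysum (k + 1) c i (n - c) (by omega) (by omega) (((c : ℕ) : ℂ)) b (fun j _ => rfl)]
  by_cases hic : i = c
  · subst hic
    rw [if_pos rfl, if_pos (le_refl i), Nat.sub_self,
      show ((i : ℕ) : ℂ) - ((i : ℕ) : ℂ) = 0 by ring, gbinomC_zero_right, map_one, one_mul,
      show (i : ℤ) - i = 0 by ring, T_zero]
  · rw [if_neg hic]
    by_cases hle : c ≤ i
    · rw [if_pos hle, show ((c : ℕ) : ℂ) - ((c : ℕ) : ℂ) = ((0 : ℕ) : ℂ) by push_cast; ring,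
        gbinomC_natCast, Nat.choose_eq_zero_of_lt (by omega)]
      simp
    · rw [if_neg hle]
      simp


lemma gbinom_neg (u r : ℕ) : gbinom (-(u : ℤ) - 1) r = (-1 : ℂ) ^ r * ((u + r).choose r : ℂ) := by
  rw [gbinom_eq, show ((-(u : ℤ) - 1 : ℤ) : ℂ) = -((u + 1 : ℕ) : ℂ) by push_cast; ring,
    gbinomC_neg, gbinomC_natCast]

lemma neg_one_pow_par (a b : ℕ) (h : a % 2 = b % 2) : (-1 : ℂ) ^ a = (-1) ^ b := by
  conv_lhs => rw [← Nat.div_add_mod a 2]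
  conv_rhs => rw [← Nat.div_add_mod b 2]
  rw [pow_add, pow_add, pow_mul, pow_mul, neg_one_sq, one_pow, one_pow, h]

lemma entry_AV_low (n k m c : ℕ) (hc : c ≤ n) (hnk : n < k) (hm : m ≤ k) :
    ∑ j ∈ Finset.range (k + 1), Afun (n : ℤ) m j * Vfun n k j c = Mfun n k m c := by
  by_cases hmn : m ≤ n
  case neg =>
    -- m > n : every term vanishes, and so does the target
    rw [Mfun, if_pos hc, if_neg (by omega : ¬ m ≤ c)]
    apply Finset.sum_eq_zero
    intro j hj
    rw [Afun, Vfun, if_pos hc]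
    by_cases h1 : j + c ≤ n
    · rw [if_pos h1, if_pos (by omega : j ≤ m),
        show (n : ℤ) - j = ((n - j : ℕ) : ℤ) by omega, gbinom_natCast,
        Nat.choose_eq_zero_of_lt (by omega : n - j < m - j)]
      simp
    · rw [if_neg h1, mul_zero]
  case pos =>
    set b : ℕ → ℂ := fun j =>
      (-1 : ℂ) ^ j * ((n - c).choose j : ℂ) * gbinomC (((n : ℕ) : ℂ) - (j : ℂ)) (n - m) with hb
    have hg : ∀ j ∈ Finset.range (k + 1),
        Afun (n : ℤ) m j * Vfun n k j c = C (b j) * T ((c : ℤ) - m) := by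
      intro j hj
      simp only [Finset.mem_range] at hj
      rw [Afun, Vfun, if_pos hc]
      by_cases h1 : j + c ≤ n
      · by_cases h2 : j ≤ m
        · rw [if_pos h2, if_pos h1, CT_mul,
            show (n : ℤ) - m - j + ((j : ℤ) + c - n) = (c : ℤ) - m by ring]
          congr 1
          simp only [hb]
          rw [show (n : ℤ) - c = ((n - c : ℕ) : ℤ) by omega, gbinom_natCast,
            show (n : ℤ) - j = ((n - j : ℕ) : ℤ) by omega, gbinom_eq, Int.cast_natCast,
            gbinomC_symm (by omega : m - j ≤ n - j), show (n - j) - (m - j) = n - m by omega,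
            show ((n - j : ℕ) : ℂ) = ((n : ℕ) : ℂ) - (j : ℂ) by
              rw [Nat.cast_sub (by omega : j ≤ n)]]
          ring
        · rw [if_neg h2, zero_mul]
          simp only [hb]
          rw [show ((n : ℕ) : ℂ) - (j : ℂ) = ((n - j : ℕ) : ℂ) by
              rw [Nat.cast_sub (by omega : j ≤ n)],
            gbinomC_nat_vanish (by omega : n - j < n - m)]
          simp
      · rw [if_neg h1, mul_zero]
        simp only [hb]
        rw [Nat.choose_eq_zero_of_lt (by omega : n - c < j)]
        simp
    have hb' : ∀ j ∈ Finset.range (k + 1), b j = if 0 ≤ j then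
        (-1 : ℂ) ^ (j - 0) * ((n - c).choose (j - 0) : ℂ) *
          gbinomC (((n : ℕ) : ℂ) - ((j - 0 : ℕ) : ℂ)) (n - m) else 0 := by
      intro j _
      simp [hb]
    rw [sum_CT ((c : ℤ) - m) _ b hg,
      keysum (k + 1) (n - c) (n - m) 0 (by omega) (by omega) (((n : ℕ) : ℂ)) b hb']
    rw [Mfun, if_pos hc]
    by_cases hmc : m ≤ c
    · rw [if_pos (by omega : n - c ≤ n - m), if_pos hmc,
        show ((n : ℕ) : ℂ) - ((n - c : ℕ) : ℂ) = ((c : ℕ) : ℂ) by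
          rw [Nat.cast_sub (by omega : c ≤ n)]; ring,
        show (n - m) - (n - c) = c - m by omega, gbinomC_natCast,
        Nat.choose_symm hmc, gbinom_natCast]
    · rw [if_neg (by omega : ¬ n - c ≤ n - m), if_neg hmc]
      simp


lemma entry_AV_high (n k m c : ℕ) (hc : n < c) (hck : c ≤ k) (hnk : n < k) (hm : m ≤ k) :
    ∑ j ∈ Finset.range (k + 1), Afun (n : ℤ) m j * Vfun n k j c
      = Mfun n k m c * T (-(k + 1 : ℤ)) := by
  by_cases hmn : n < m
  case neg =>
    -- m ≤ n : every term vanishes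
    rw [Mfun, if_neg (by omega : ¬ c ≤ n), if_neg (by omega : ¬ (n < m ∧ m + c ≤ n + k + 1)),
      zero_mul]
    apply Finset.sum_eq_zero
    intro j hj
    rw [Afun, Vfun, if_neg (by omega : ¬ c ≤ n)]
    by_cases h1 : j ≤ m
    · rw [if_neg (by omega : ¬ (n < j ∧ j ≤ c)), mul_zero]
    · rw [if_neg h1, zero_mul]
  case pos =>
    set b0 : ℕ → ℂ := fun j => if n + 1 ≤ j then
        (-1 : ℂ) ^ (j - (n + 1)) * ((m - n - 1).choose (j - (n + 1)) : ℂ) *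
          gbinomC (((k - n - 1 : ℕ) : ℂ) - ((j - (n + 1) : ℕ) : ℂ)) (k - c) else 0 with hb0
    set e : ℂ := (-1 : ℂ) ^ (m + c - n - 1) with he
    have hg : ∀ j ∈ Finset.range (k + 1),
        Afun (n : ℤ) m j * Vfun n k j c = C (e * b0 j) * T ((n : ℤ) - m - c) := by
      intro j hj
      simp only [Finset.mem_range] at hj
      rw [Afun, Vfun, if_neg (by omega : ¬ c ≤ n)]
      by_cases h1 : n + 1 ≤ j
      · by_cases h2 : j ≤ m
        · by_cases h3 : j ≤ c
          · -- live branch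
            rw [if_pos h2, if_pos (⟨by omega, h3⟩ : n < j ∧ j ≤ c), CT_mul,
              show (n : ℤ) - m - j + ((j : ℤ) - c) = (n : ℤ) - m - c by ring]
            congr 1
            simp only [hb0, if_pos h1, he]
            rw [show (n : ℤ) - j = -((j - (n + 1) : ℕ) : ℤ) - 1 by omega, gbinom_neg,
              show j - (n + 1) + (m - j) = m - n - 1 by omega,
              ← Nat.choose_symm (by omega : m - j ≤ m - n - 1),
              show (m - n - 1) - (m - j) = j - (n + 1) by omega,
              show (k : ℤ) - j = ((k - j : ℕ) : ℤ) by omega, gbinom_eq, Int.cast_natCast,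
              gbinomC_symm (by omega : c - j ≤ k - j), show (k - j) - (c - j) = k - c by omega,
              show ((k - j : ℕ) : ℂ) = ((k - n - 1 : ℕ) : ℂ) - ((j - (n + 1) : ℕ) : ℂ) by
                rw [Nat.cast_sub (by omega : j ≤ k), Nat.cast_sub (by omega : n + 1 ≤ j)]
                rw [show ((k - n - 1 : ℕ) : ℂ) = (k : ℂ) - ((n : ℂ) + 1) by
                  rw [show (k - n - 1 : ℕ) = k - (n + 1) by omega,
                    Nat.cast_sub (by omega : n + 1 ≤ k)]
                  push_cast; ring]
                push_cast; ring]
            rw [show ((-1 : ℂ) ^ j * ((-1 : ℂ) ^ (m - j) * ((m - n - 1).choose (j - (n + 1)) : ℂ)))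
                  * ((-1 : ℂ) ^ (c - j) * gbinomC (((k - n - 1 : ℕ) : ℂ) - ((j - (n + 1) : ℕ) : ℂ)) (k - c))
                = ((-1 : ℂ) ^ j * (-1 : ℂ) ^ (m - j) * (-1 : ℂ) ^ (c - j)) *
                    (((m - n - 1).choose (j - (n + 1)) : ℂ) *
                      gbinomC (((k - n - 1 : ℕ) : ℂ) - ((j - (n + 1) : ℕ) : ℂ)) (k - c)) by ring,
              ← pow_add, ← pow_add,
              neg_one_pow_par (j + (m - j) + (c - j)) ((m + c - n - 1) + (j - (n + 1)))
                (by omega), pow_add]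
            ring
          · -- j > c : V = 0
            rw [if_neg (by omega : ¬ (n < j ∧ j ≤ c)), mul_zero]
            simp only [hb0, if_pos h1]
            rw [show ((k - n - 1 : ℕ) : ℂ) - ((j - (n + 1) : ℕ) : ℂ) = ((k - j : ℕ) : ℂ) by
                rw [show (k - n - 1 : ℕ) = k - (n + 1) by omega,
                  Nat.cast_sub (by omega : n + 1 ≤ k), Nat.cast_sub (by omega : n + 1 ≤ j),
                  Nat.cast_sub (by omega : j ≤ k)]
                push_cast; ring,
              gbinomC_nat_vanish (by omega : k - j < k - c)]
            simp
        · -- j > m : A = 0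
          rw [if_neg h2, zero_mul]
          simp only [hb0, if_pos h1]
          rw [Nat.choose_eq_zero_of_lt (by omega : m - n - 1 < j - (n + 1))]
          simp
      · -- j ≤ n : V = 0
        rw [if_neg (by omega : ¬ (n < j ∧ j ≤ c)), mul_zero]
        simp only [hb0, if_neg h1]
        simp
    rw [sum_CT ((n : ℤ) - m - c) _ (fun j => e * b0 j) hg]
    have : ∑ j ∈ Finset.range (k + 1), e * b0 j = e * ∑ j ∈ Finset.range (k + 1), b0 j := by
      rw [Finset.mul_sum]
    rw [this,
      keysum (k + 1) (m - n - 1) (k - c) (n + 1) (by omega) (by omega)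
        (((k - n - 1 : ℕ) : ℂ)) b0 (fun j _ => rfl)]
    rw [Mfun, if_neg (by omega : ¬ c ≤ n)]
    by_cases hg2 : m + c ≤ n + k + 1
    · rw [if_pos (by omega : m - n - 1 ≤ k - c), if_pos (⟨hmn, hg2⟩ : n < m ∧ m + c ≤ n + k + 1),
        show ((k - n - 1 : ℕ) : ℂ) - ((m - n - 1 : ℕ) : ℂ) = ((k - m : ℕ) : ℂ) by
          rw [show (k - n - 1 : ℕ) = k - (n + 1) by omega,
            show (m - n - 1 : ℕ) = m - (n + 1) by omega,
            Nat.cast_sub (by omega : n + 1 ≤ k), Nat.cast_sub (by omega : n + 1 ≤ m),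
            Nat.cast_sub (by omega : m ≤ k)]
          push_cast; ring,
        show (k - c) - (m - n - 1) = n + k + 1 - m - c by omega, gbinomC_natCast,
        show (k : ℤ) - m = ((k - m : ℕ) : ℤ) by omega, gbinom_natCast,
        mul_assoc, ← T_add, show (n : ℤ) + k + 1 - m - c + -(k + 1) = (n : ℤ) - m - c by ring,
        he]
    · rw [if_neg (by omega : ¬ m - n - 1 ≤ k - c),
        if_neg (by omega : ¬ (n < m ∧ m + c ≤ n + k + 1)), zero_mul]
      simp


lemma entry_MN_low (n k m c : ℕ) (hc : c ≤ n) (hnk : n ≤ k) (hm : m ≤ k) :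
    ∑ j ∈ Finset.range (k + 1), Mfun n k m j * Nfun n k j c
      = if m = c then 1 else 0 := by
  by_cases hmn : m ≤ n
  case neg =>
    rw [if_neg (by omega : ¬ m = c)]
    apply Finset.sum_eq_zero
    intro j hj
    by_cases h1 : j ≤ n
    · rw [Mfun, if_pos h1, if_neg (by omega : ¬ m ≤ j), zero_mul]
    · rw [Nfun, if_pos hc, if_neg (by omega : ¬ j ≤ c), mul_zero]
  case pos =>
    have hrefl := Finset.sum_range_reflect (fun j => Mfun n k m j * Nfun n k j c) (k + 1)
    rw [← hrefl]
    simp only [Nat.add_sub_cancel]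
    set b : ℕ → ℂ := fun j => if k - c ≤ j then
        (-1 : ℂ) ^ (j - (k - c)) * (c.choose (j - (k - c)) : ℂ) *
          gbinomC (((c : ℕ) : ℂ) - ((j - (k - c) : ℕ) : ℂ)) m else 0 with hb
    have hg : ∀ j ∈ Finset.range (k + 1),
        Mfun n k m (k - j) * Nfun n k (k - j) c = C (b j) * T ((c : ℤ) - m) := by
      intro j hj
      simp only [Finset.mem_range] at hj
      by_cases h1 : k - c ≤ j
      · rw [Mfun, if_pos (by omega : k - j ≤ n), Nfun, if_pos hc, if_pos (by omega : k - j ≤ c)]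
        by_cases h2 : m ≤ k - j
        · rw [if_pos h2, CT_mul,
            show ((k - j : ℕ) : ℤ) - m + ((c : ℤ) - ((k - j : ℕ) : ℤ)) = (c : ℤ) - m by ring]
          congr 1
          simp only [hb, if_pos h1]
          rw [gbinom_eq ((k - j : ℕ) : ℤ) m, Int.cast_natCast,
            show ((k - j : ℕ) : ℂ) = ((c : ℕ) : ℂ) - ((j - (k - c) : ℕ) : ℂ) by
              rw [Nat.cast_sub (by omega : j ≤ k), Nat.cast_sub (by omega : k - c ≤ j),
                Nat.cast_sub (by omega : c ≤ k)]
              push_cast; ring,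
            gbinom_natCast c (k - j), ← Nat.choose_symm (by omega : k - j ≤ c),
            show c - (k - j) = j - (k - c) by omega]
          ring
        · rw [if_neg h2, zero_mul]
          simp only [hb, if_pos h1]
          rw [show ((c : ℕ) : ℂ) - ((j - (k - c) : ℕ) : ℂ) = ((k - j : ℕ) : ℂ) by
              rw [Nat.cast_sub (by omega : j ≤ k), Nat.cast_sub (by omega : k - c ≤ j),
                Nat.cast_sub (by omega : c ≤ k)]
              push_cast; ring,
            gbinomC_nat_vanish (by omega : k - j < m)]
          simp
      · rw [Nfun, if_pos hc, if_neg (by omega : ¬ k - j ≤ c), mul_zero]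
        simp only [hb, if_neg h1]
        simp
    rw [sum_CT ((c : ℤ) - m) _ b hg,
      keysum (k + 1) c m (k - c) (by omega) (by omega) (((c : ℕ) : ℂ)) b (fun j _ => rfl)]
    by_cases hmc : m = c
    · subst hmc
      rw [if_pos rfl, if_pos (le_refl m), Nat.sub_self,
        show ((m : ℕ) : ℂ) - ((m : ℕ) : ℂ) = 0 by ring, gbinomC_zero_right, map_one, one_mul,
        show (m : ℤ) - m = 0 by ring, T_zero]
    · rw [if_neg hmc]
      by_cases hle : c ≤ m
      · rw [if_pos hle, show ((c : ℕ) : ℂ) - ((c : ℕ) : ℂ) = ((0 : ℕ) : ℂ) by push_cast; ring,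
          gbinomC_natCast, Nat.choose_eq_zero_of_lt (by omega)]
        simp
      · rw [if_neg hle]
        simp

lemma entry_MN_high (n k m c : ℕ) (hc : n < c) (hck : c ≤ k) (hnk : n < k) (hm : m ≤ k) :
    ∑ j ∈ Finset.range (k + 1), Mfun n k m j * Nfun n k j c
      = if m = c then 1 else 0 := by
  by_cases hmn : n < m
  case neg =>
    rw [if_neg (by omega : ¬ m = c)]
    apply Finset.sum_eq_zero
    intro j hj
    by_cases h1 : n < j
    · rw [Mfun, if_neg (by omega : ¬ j ≤ n), if_neg (by omega : ¬ (n < m ∧ m + j ≤ n + k + 1)),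
        zero_mul]
    · rw [Nfun, if_neg (by omega : ¬ c ≤ n), if_neg (by omega : ¬ (n < j ∧ n + k + 1 ≤ j + c)),
        mul_zero]
  case pos =>
    have hrefl := Finset.sum_range_reflect (fun j => Mfun n k m j * Nfun n k j c) (k + 1)
    rw [← hrefl]
    simp only [Nat.add_sub_cancel]
    set b : ℕ → ℂ := fun j => if m - n - 1 ≤ j then
        (-1 : ℂ) ^ (j - (m - n - 1)) * ((k - m).choose (j - (m - n - 1)) : ℂ) *
          gbinomC (((k - m : ℕ) : ℂ) - ((j - (m - n - 1) : ℕ) : ℂ)) (k - c) else 0 with hb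
    have hg : ∀ j ∈ Finset.range (k + 1),
        Mfun n k m (k - j) * Nfun n k (k - j) c = C (b j) * T ((c : ℤ) - m) := by
      intro j hj
      simp only [Finset.mem_range] at hj
      by_cases h0 : k - n ≤ j
      · -- k - j ≤ n : M row m > n is zero there
        rw [Mfun, if_pos (by omega : k - j ≤ n), if_neg (by omega : ¬ m ≤ k - j), zero_mul]
        simp only [hb]
        by_cases h1 : m - n - 1 ≤ j
        · rw [if_pos h1, Nat.choose_eq_zero_of_lt (by omega : k - m < j - (m - n - 1))]
          simp
        · rw [if_neg h1]
          simp
      · rw [Mfun, if_neg (by omega : ¬ k - j ≤ n)]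
        by_cases h2 : m - n - 1 ≤ j
        · rw [if_pos (by omega : n < m ∧ m + (k - j) ≤ n + k + 1)]
          by_cases h3 : j + n + 1 ≤ c
          · -- live branch
            rw [Nfun, if_neg (by omega : ¬ c ≤ n),
              if_pos (by omega : n < k - j ∧ n + k + 1 ≤ k - j + c), CT_mul,
              show (n : ℤ) + k + 1 - m - ((k - j : ℕ) : ℤ)
                  + (((k - j : ℕ) : ℤ) + c - n - k - 1) = (c : ℤ) - m by ring]
            congr 1
            simp only [hb, if_pos h2]
            rw [show n + k + 1 - m - (k - j) = j - (m - n - 1) by omega,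
              show (k : ℤ) - m = ((k - m : ℕ) : ℤ) by omega, gbinom_natCast,
              show ((k - j : ℕ) : ℤ) - n - 1 = ((k - j - (n + 1) : ℕ) : ℤ) by omega,
              gbinom_eq, Int.cast_natCast,
              gbinomC_symm (by omega : k - j + c - n - k - 1 ≤ k - j - (n + 1)),
              show (k - j - (n + 1)) - (k - j + c - n - k - 1) = k - c by omega,
              show ((k - j - (n + 1) : ℕ) : ℂ)
                  = ((k - m : ℕ) : ℂ) - ((j - (m - n - 1) : ℕ) : ℂ) by
                rw [show (k - j - (n + 1) : ℕ) = (k - m) - (j - (m - n - 1)) by omega,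
                  Nat.cast_sub (by omega : j - (m - n - 1) ≤ k - m)]]
            rw [show ((-1 : ℂ) ^ (m + (k - j) - n - 1) * (((k - m).choose (j - (m - n - 1)) : ℂ)))
                  * ((-1 : ℂ) ^ k *
                    gbinomC (((k - m : ℕ) : ℂ) - ((j - (m - n - 1) : ℕ) : ℂ)) (k - c))
                = ((-1 : ℂ) ^ (m + (k - j) - n - 1) * (-1 : ℂ) ^ k) *
                    (((k - m).choose (j - (m - n - 1)) : ℂ) *
                      gbinomC (((k - m : ℕ) : ℂ) - ((j - (m - n - 1) : ℕ) : ℂ)) (k - c)) by ring,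
              ← pow_add,
              neg_one_pow_par (m + (k - j) - n - 1 + k) (j - (m - n - 1)) (by omega)]
            ring
          · rw [Nfun, if_neg (by omega : ¬ c ≤ n),
              if_neg (by omega : ¬ (n < k - j ∧ n + k + 1 ≤ k - j + c)), mul_zero]
            simp only [hb, if_pos h2]
            rw [show ((k - m : ℕ) : ℂ) - ((j - (m - n - 1) : ℕ) : ℂ) = ((k - j - (n + 1) : ℕ) : ℂ) by
                rw [show (k - j - (n + 1) : ℕ) = (k - m) - (j - (m - n - 1)) by omega,
                  Nat.cast_sub (by omega : j - (m - n - 1) ≤ k - m)],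
              gbinomC_nat_vanish (by omega : k - j - (n + 1) < k - c)]
            simp
        · rw [if_neg (by omega : ¬ (n < m ∧ m + (k - j) ≤ n + k + 1)), zero_mul]
          simp only [hb, if_neg h2]
          simp
    rw [sum_CT ((c : ℤ) - m) _ b hg,
      keysum (k + 1) (k - m) (k - c) (m - n - 1) (by omega) (by omega)
        (((k - m : ℕ) : ℂ)) b (fun j _ => rfl)]
    by_cases hmc : m = c
    · subst hmc
      rw [if_pos rfl, if_pos (le_refl (k - m)), Nat.sub_self,
        show ((k - m : ℕ) : ℂ) - ((k - m : ℕ) : ℂ) = 0 by ring, gbinomC_zero_right, map_one,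
        one_mul, show (m : ℤ) - m = 0 by ring, T_zero]
    · rw [if_neg hmc]
      by_cases hle : k - m ≤ k - c
      · rw [if_pos hle,
          show ((k - m : ℕ) : ℂ) - ((k - m : ℕ) : ℂ) = ((0 : ℕ) : ℂ) by push_cast; ring,
          gbinomC_natCast, Nat.choose_eq_zero_of_lt (by omega)]
        simp
      · rw [if_neg hle]
        simp


lemma entry_VW_cross1 (n k i c : ℕ) (hc : c ≤ n) (hi : n < i) :
    ∑ j ∈ Finset.range (k + 1), Vfun n k i j * Wfun n k j c = 0 := by
  apply Finset.sum_eq_zero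
  intro j hj
  by_cases h1 : j ≤ n
  · rw [Vfun, if_pos h1, if_neg (by omega : ¬ i + j ≤ n), zero_mul]
  · rw [Wfun, if_pos hc, if_neg (by omega : ¬ (j ≤ n ∧ n ≤ j + c)), mul_zero]

lemma entry_VW_cross2 (n k i c : ℕ) (hc : n < c) (hi : i ≤ n) :
    ∑ j ∈ Finset.range (k + 1), Vfun n k i j * Wfun n k j c = 0 := by
  apply Finset.sum_eq_zero
  intro j hj
  by_cases h1 : j ≤ n
  · rw [Wfun, if_neg (by omega : ¬ c ≤ n), if_neg (by omega : ¬ (n < j ∧ j ≤ c)), mul_zero]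
  · rw [Vfun, if_neg h1, if_neg (by omega : ¬ (n < i ∧ i ≤ j)), zero_mul]

noncomputable def Vmat (n k : ℕ) : Matrix (Fin (k + 1)) (Fin (k + 1)) (LaurentPolynomial ℂ) :=
  Matrix.of fun i c => Vfun n k i.val c.val

noncomputable def Wmat (n k : ℕ) : Matrix (Fin (k + 1)) (Fin (k + 1)) (LaurentPolynomial ℂ) :=
  Matrix.of fun i c => Wfun n k i.val c.val

noncomputable def Mmat (n k : ℕ) : Matrix (Fin (k + 1)) (Fin (k + 1)) (LaurentPolynomial ℂ) :=
  Matrix.of fun i c => Mfun n k i.val c.val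

noncomputable def Nmat (n k : ℕ) : Matrix (Fin (k + 1)) (Fin (k + 1)) (LaurentPolynomial ℂ) :=
  Matrix.of fun i c => Nfun n k i.val c.val

lemma hVW (n k : ℕ) (hnk : n < k) : Vmat n k * Wmat n k = 1 := by
  refine Matrix.ext fun i c => ?_
  rw [Matrix.mul_apply, Matrix.one_apply]
  have h2 : ∑ l : Fin (k + 1), Vmat n k i l * Wmat n k l c
      = ∑ jj ∈ Finset.range (k + 1), Vfun n k i.val jj * Wfun n k jj c.val :=
    Fin.sum_univ_eq_sum_range (fun jj => Vfun n k i.val jj * Wfun n k jj c.val) (k + 1)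
  rw [h2]
  have hik : i.val ≤ k := by omega
  have hck : c.val ≤ k := by omega
  have hval : (if i.val = c.val then (1 : LaurentPolynomial ℂ) else 0)
      = if i = c then 1 else 0 := by simp [Fin.val_inj]
  by_cases hc : c.val ≤ n
  · by_cases hi : i.val ≤ n
    · rw [entry_VW_low n k i.val c.val hc (by omega) hi, hval]
    · rw [entry_VW_cross1 n k i.val c.val hc (by omega), if_neg (by
        intro hh; rw [hh] at hi; omega)]
  · by_cases hi : i.val ≤ n
    · rw [entry_VW_cross2 n k i.val c.val (by omega) hi, if_neg (by
        intro hh; rw [hh] at hi; omega)]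
    · rw [entry_VW_high n k i.val c.val (by omega) hck (by omega) hik, hval]

lemma hMN (n k : ℕ) (hnk : n < k) : Mmat n k * Nmat n k = 1 := by
  refine Matrix.ext fun m c => ?_
  rw [Matrix.mul_apply, Matrix.one_apply]
  have h2 : ∑ l : Fin (k + 1), Mmat n k m l * Nmat n k l c
      = ∑ jj ∈ Finset.range (k + 1), Mfun n k m.val jj * Nfun n k jj c.val :=
    Fin.sum_univ_eq_sum_range (fun jj => Mfun n k m.val jj * Nfun n k jj c.val) (k + 1)
  rw [h2]
  have hval : (if m.val = c.val then (1 : LaurentPolynomial ℂ) else 0)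
      = if m = c then 1 else 0 := by simp [Fin.val_inj]
  by_cases hc : c.val ≤ n
  · rw [entry_MN_low n k m.val c.val hc (by omega) (by omega), hval]
  · rw [entry_MN_high n k m.val c.val (by omega) (by omega) (by omega) (by omega), hval]

lemma hAVMD (n k : ℕ) (hnk : n < k) :
    jetTransition (n : ℤ) k * Vmat n k
      = Mmat n k * Matrix.diagonal (fun i : Fin (k + 1) =>
          if i.val ≤ n then (1 : LaurentPolynomial ℂ) else T (-(k + 1 : ℤ))) := by
  refine Matrix.ext fun m c => ?_
  rw [Matrix.mul_apply, Matrix.mul_diagonal]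
  have h2 : ∑ l : Fin (k + 1), jetTransition (n : ℤ) k m l * Vmat n k l c
      = ∑ jj ∈ Finset.range (k + 1), Afun (n : ℤ) m.val jj * Vfun n k jj c.val :=
    Fin.sum_univ_eq_sum_range (fun jj => Afun (n : ℤ) m.val jj * Vfun n k jj c.val) (k + 1)
  rw [h2]
  by_cases hc : c.val ≤ n
  · rw [entry_AV_low n k m.val c.val hc hnk (by omega), if_pos hc, mul_one]
    rfl
  · rw [entry_AV_high n k m.val c.val (by omega) (by omega) hnk (by omega), if_neg hc]
    rfl

lemma polyN (n k : ℕ) : ∀ i j, IsPolyFun (Nmat n k i j) := by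
  intro i j
  show IsPolyFun (Nfun n k i.val j.val)
  rw [Nfun]
  split_ifs with h1 h2 h3
  · exact isPolyFun_CT _ _ (by omega)
  · exact isPolyFun_zero
  · exact isPolyFun_CT _ _ (by omega)
  · exact isPolyFun_zero

lemma polyM (n k : ℕ) : ∀ i j, IsPolyFun (Mmat n k i j) := by
  intro i j
  show IsPolyFun (Mfun n k i.val j.val)
  rw [Mfun]
  split_ifs with h1 h2 h3
  · exact isPolyFun_CT _ _ (by omega)
  · exact isPolyFun_zero
  · exact isPolyFun_CT _ _ (by omega)
  · exact isPolyFun_zero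

lemma antiV (n k : ℕ) : ∀ i j, IsAntiPolyFun (Vmat n k i j) := by
  intro i j
  show IsAntiPolyFun (Vfun n k i.val j.val)
  rw [Vfun]
  split_ifs with h1 h2 h3
  · exact isAntiPolyFun_CT _ _ (by omega)
  · exact isAntiPolyFun_zero
  · exact isAntiPolyFun_CT _ _ (by omega)
  · exact isAntiPolyFun_zero

lemma antiW (n k : ℕ) : ∀ i j, IsAntiPolyFun (Wmat n k i j) := by
  intro i j
  show IsAntiPolyFun (Wfun n k i.val j.val)
  rw [Wfun]
  split_ifs with h1 h2 h3
  · exact isAntiPolyFun_CT _ _ (by omega)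
  · exact isAntiPolyFun_zero
  · exact isAntiPolyFun_CT _ _ (by omega)
  · exact isAntiPolyFun_zero


theorem jet_of_On_splits_small_twist (n k : ℕ) (h : n < k) :
    BundleEquiv (jetTransition n k)
      (Matrix.diagonal fun i : Fin (k + 1) =>
        if i.val ≤ n then (1 : LaurentPolynomial ℂ) else T (-(k + 1 : ℤ))) := by
  refine ⟨Nmat n k, Vmat n k, ⟨polyN n k, Mmat n k, polyM n k, ?_, hMN n k h⟩,
    ⟨antiV n k, Wmat n k, antiW n k, hVW n k h, ?_⟩, ?_⟩
  · exact mul_eq_one_comm.mp (hMN n k h)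
  · exact mul_eq_one_comm.mp (hVW n k h)
  · rw [Matrix.mul_assoc, hAVMD n k h, ← Matrix.mul_assoc,
      mul_eq_one_comm.mp (hMN n k h), Matrix.one_mul]
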